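/- Let A be an abelian category and V an object such that all set-indexed coproducts of copies of V exist in A. If Gen(V) ⊆ Ker(Ext^1_A(V, −)), then (Gen(V), V^⊥) is a torsion pair in A, where for each object A one uses the trace tr_V(A) (the image of the canonical map V^{(Hom(V,A))} → A) as the torsion subobject. -/
import Mathlib


open CategoryTheory CategoryTheory.Limits

universe v u

namespace Paper

/-- A torsion pair `(T, F)` in an abelian category. -/
structure TorsionPair {C : Type u} [Category.{v} C] [Abelian C] (T F : C → Prop) : Prop where
  isoClosed_torsion : ∀ {X Y : C}, (X ≅ Y) → T X → T Y
  isoClosed_free : ∀ {X Y : C}, (X ≅ Y) → F X → F Y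
  hom_eq_zero : ∀ {X Y : C}, T X → F Y → ∀ f : X ⟶ Y, f = 0
  exists_ses : ∀ X : C, ∃ (TX FX : C) (i : TX ⟶ X) (p : X ⟶ FX) (w : i ≫ p = 0),
      T TX ∧ F FX ∧ (ShortComplex.mk i p w).ShortExact

variable {C : Type u} [Category.{v} C] [Abelian C]

/-- `X` is `V`-generated: there is an epimorphism `V^{(I)} ↠ X` for some set `I`. -/
def Gen (V : C) [∀ I : Type v, HasCoproduct (fun _ : I => V)] (X : C) : Prop :=
  ∃ (I : Type v) (p : (∐ (fun _ : I => V)) ⟶ X), Epi p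

/-- `Ext¹(V, X) = 0`, expressed elementwise: every short exact sequence
`0 → X → E → V → 0` splits. -/
def ext1Zero (V X : C) : Prop :=
  ∀ (E : C) (a : X ⟶ E) (b : E ⟶ V) (w : a ≫ b = 0),
    (ShortComplex.mk a b w).ShortExact → ∃ s : V ⟶ E, s ≫ b = 𝟙 V

/-- The canonical evaluation morphism `ε_A : V^{(Hom(V,A))} → A`. -/
noncomputable def eval (V : C) [∀ I : Type v, HasCoproduct (fun _ : I => V)] (A : C) :
    (∐ (fun _ : (V ⟶ A) => V)) ⟶ A :=
  Sigma.desc fun f => f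

/-- A mono together with its cokernel projection forms a short exact sequence. -/
lemma mono_cokernel_shortExact {X Y : C} (f : X ⟶ Y) [Mono f] :
    (ShortComplex.mk f (cokernel.π f) (cokernel.condition f)).ShortExact :=
  { exact := ShortComplex.exact_of_f_is_kernel _
      (Abelian.monoIsKernelOfCokernel _ (colimit.isColimit _)) }

/-- if all coproducts of copies of `V` exist and
`Gen(V) ⊆ Ker(Ext¹(V,−))`, then `(Gen(V), V^⊥)` is a torsion pair, with the trace
`tr_V(A)` (the image of the canonical map `V^{(Hom(V,A))} → A`) as the torsion
subobject of each object `A`. -/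
theorem statement6 (V : C) [∀ I : Type v, HasCoproduct (fun _ : I => V)]
    (h : ∀ X : C, Gen V X → ext1Zero V X) :
    TorsionPair (Gen V) (fun Y => ∀ f : V ⟶ Y, f = 0) ∧
    ∀ A : C, Gen V (image (eval V A)) ∧
      ∀ f : V ⟶ cokernel (image.ι (eval V A)), f = 0 := by
  have key : ∀ A : C, Gen V (image (eval V A)) ∧
      ∀ f : V ⟶ cokernel (image.ι (eval V A)), f = 0 := by
    intro A
    have hgen : Gen V (image (eval V A)) :=
      ⟨V ⟶ A, factorThruImage (eval V A), inferInstance⟩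
    refine ⟨hgen, ?_⟩
    intro f
    set π := cokernel.π (image.ι (eval V A)) with hπ
    let a : image (eval V A) ⟶ pullback π f :=
      pullback.lift (image.ι (eval V A)) 0 (by rw [hπ, cokernel.condition, zero_comp])
    have hafst : a ≫ pullback.fst π f = image.ι (eval V A) := pullback.lift_fst _ _ _
    have ha : a ≫ pullback.snd π f = 0 := pullback.lift_snd _ _ _
    have hmono : Mono a := mono_of_mono_fac hafst
    have hlim : IsLimit (KernelFork.ofι a ha) := by
      refine KernelFork.IsLimit.ofι a ha
        (fun {Z} u hu => Abelian.monoLift (image.ι (eval V A)) (u ≫ pullback.fst π f) ?_) ?_ ?_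
      · rw [Category.assoc, pullback.condition, ← Category.assoc, hu, zero_comp]
      · intro Z u hu
        apply pullback.hom_ext
        · rw [Category.assoc, hafst, Abelian.monoLift_comp]
        · rw [Category.assoc, ha, comp_zero, hu]
      · intro Z u hu m hm
        have hmt : m ≫ image.ι (eval V A) = u ≫ pullback.fst π f := by
          rw [← hm, Category.assoc, hafst]
        rw [← cancel_mono (image.ι (eval V A)), Abelian.monoLift_comp, hmt]
    have hSE : (ShortComplex.mk a (pullback.snd π f) ha).ShortExact :=
      { exact := ShortComplex.exact_of_f_is_kernel _ hlim }
    obtain ⟨s, hs⟩ := h _ hgen _ a (pullback.snd π f) ha hSE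
    have hf : (s ≫ pullback.fst π f) ≫ π = f := by
      rw [Category.assoc, pullback.condition, ← Category.assoc, hs, Category.id_comp]
    have h1 : s ≫ pullback.fst π f =
        (Sigma.ι (fun _ : (V ⟶ A) => V) (s ≫ pullback.fst π f) ≫
          factorThruImage (eval V A)) ≫ image.ι (eval V A) := by
      rw [Category.assoc, image.fac]
      simp [eval]
    have hc : image.ι (eval V A) ≫ π = 0 := cokernel.condition _
    rw [← hf, h1, Category.assoc, hc, comp_zero]
  refine ⟨?_, key⟩
  constructor
  · rintro X Y e ⟨I, p, hp⟩
    exact ⟨I, p ≫ e.hom, epi_comp _ _⟩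
  · intro X Y e hF f
    rw [← Category.comp_id f, ← e.inv_hom_id, ← Category.assoc, hF (f ≫ e.inv), zero_comp]
  · rintro X Y ⟨I, p, hp⟩ hF f
    rw [← cancel_epi p, comp_zero]
    apply colimit.hom_ext
    intro i
    simp only [comp_zero]
    rw [← Category.assoc]
    exact hF _
  · intro A
    exact ⟨image (eval V A), cokernel (image.ι (eval V A)), image.ι (eval V A),
      cokernel.π _, cokernel.condition _, (key A).1, (key A).2,
      mono_cokernel_shortExact _⟩

end Paper
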